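/- Let q : B_a → ℝ (where B_a ⊂ ℝ³ is the open ball of radius a centered at the origin) be radially symmetric, i.e. there exists a trace function q̄ : [0,a) → ℝ with q(x) = q̄(|x|). Then q is of class Cⁿ on B_a if and only if q̄ is Cⁿ on [0,a) (differentiable up to the boundary at 0) and all odd-order derivatives of q̄ of order at most n vanish at zero. -/

import Mathlib

open Set Filter Asymptotics Metric Topology

private lemma udiffIco (a : ℝ) (ha : 0 < a) : UniqueDiffOn ℝ (Set.Ico 0 a) := by
  apply uniqueDiffOn_convex (convex_Ico 0 a)
  rw [interior_Ico]
  exact ⟨a/2, by constructor <;> [positivity; linarith]⟩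

private lemma flat_littleO (a : ℝ) (ha : 0 < a) :
    ∀ (p q : ℕ) (S : ℝ → ℝ), p ≤ q →
    ContDiffOn ℝ q S (Set.Ico 0 a) →
    (∀ j, j ≤ q → iteratedDerivWithin j S (Set.Ico 0 a) 0 = 0) →
    (fun r => S r) =o[𝓝[≥] (0:ℝ)] fun r => r ^ p := by
  intro p
  have h0I : (0:ℝ) ∈ Set.Ico 0 a := ⟨le_rfl, ha⟩
  have hud := udiffIco a ha
  induction p with
  | zero =>
    intro q S hpq hS hflat
    have hS0 : S 0 = 0 := by
      have := hflat 0 (Nat.zero_le q); rwa [iteratedDerivWithin_zero] at this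
    simp only [pow_zero]
    rw [isLittleO_one_iff]
    have h := (hS.continuousOn.continuousWithinAt h0I)
    rw [ContinuousWithinAt, nhdsWithin_Ico_eq_nhdsGE ha, hS0] at h
    exact h
  | succ p IH =>
    intro q S hpq hS hflat
    have hq1 : 1 ≤ q := le_trans (Nat.succ_le_succ (Nat.zero_le p)) hpq
    have hS0 : S 0 = 0 := by
      have := hflat 0 (Nat.zero_le q); rwa [iteratedDerivWithin_zero] at this
    set S₁ := derivWithin S (Set.Ico 0 a) with hS₁def
    have hS₁ : ContDiffOn ℝ ((q-1 : ℕ) : WithTop ℕ∞) S₁ (Set.Ico 0 a) := by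
      apply hS.derivWithin hud
      have : ((q - 1 : ℕ) : WithTop ℕ∞) + 1 = ((q - 1 + 1 : ℕ) : WithTop ℕ∞) := by push_cast; ring
      rw [this]
      exact_mod_cast Nat.le_of_eq (Nat.succ_pred_eq_of_pos hq1)
    have hflat₁ : ∀ j, j ≤ q - 1 → iteratedDerivWithin j S₁ (Set.Ico 0 a) 0 = 0 := by
      intro j hj
      rw [hS₁def, ← iteratedDerivWithin_succ']
      exact hflat (j+1) (by omega)
    have IH' := IH (q-1) S₁ (by omega) hS₁ hflat₁
    rw [isLittleO_iff]
    intro c hc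
    have hev := isLittleO_iff.mp IH' hc
    obtain ⟨u, hu, hsub⟩ := mem_nhdsGE_iff_exists_Ico_subset.mp hev
    have hδ : 0 < min u a := lt_min hu ha
    filter_upwards [Ico_mem_nhdsGE hδ]
      with r hr
    have hr0 : 0 ≤ r := hr.1
    have hra : r < a := lt_of_lt_of_le hr.2 (min_le_right _ _)
    have hru : r < u := lt_of_lt_of_le hr.2 (min_le_left _ _)
    have hder : ∀ t ∈ Set.Icc 0 r, HasDerivWithinAt S (S₁ t) (Set.Icc 0 r) t := by
      intro t ht
      have htI : t ∈ Set.Ico 0 a := ⟨ht.1, lt_of_le_of_lt ht.2 hra⟩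
      have hd : DifferentiableOn ℝ S (Set.Ico 0 a) :=
        hS.differentiableOn (by exact_mod_cast (by omega : q ≠ 0))
      exact ((hd t htI).hasDerivWithinAt).mono
        (fun y hy => ⟨hy.1, lt_of_le_of_lt hy.2 hra⟩)
    have hbound : ∀ t ∈ Set.Icc 0 r, ‖S₁ t‖ ≤ c * r ^ p := by
      intro t ht
      have hb := hsub ⟨ht.1, lt_of_le_of_lt ht.2 hru⟩
      calc ‖S₁ t‖ ≤ c * ‖t ^ p‖ := hb
        _ = c * t ^ p := by
            rw [Real.norm_eq_abs, abs_of_nonneg (pow_nonneg ht.1 p)]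
        _ ≤ c * r ^ p := by
            apply mul_le_mul_of_nonneg_left (pow_le_pow_left₀ ht.1 ht.2 p) hc.le
    have key := Convex.norm_image_sub_le_of_norm_hasDerivWithin_le hder hbound
      (convex_Icc 0 r) (Set.left_mem_Icc.mpr hr0) (Set.right_mem_Icc.mpr hr0)
    rw [hS0, sub_zero, sub_zero] at key
    calc ‖S r‖ ≤ c * r ^ p * ‖r‖ := key
      _ = c * ‖r ^ (p+1)‖ := by
          rw [Real.norm_eq_abs, Real.norm_eq_abs, abs_of_nonneg hr0,
            abs_of_nonneg (pow_nonneg hr0 _), pow_succ]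
          ring

private lemma pow_ratio_le_one {r : ℝ} (h0 : 0 ≤ r) (h1 : r ≤ 1) {p d e : ℕ}
    (h : e ≤ p + d) : r ^ p * r ^ d / r ^ e ≤ 1 := by
  rcases h0.eq_or_lt with heq | hpos
  · subst heq
    rcases Nat.eq_zero_or_pos e with rfl | he
    · rw [pow_zero, div_one, ← pow_add]
      exact pow_le_one₀ le_rfl zero_le_one
    · rw [zero_pow he.ne', div_zero]
      exact zero_le_one
  · rw [← pow_add, div_le_one (pow_pos hpos e)]
    exact pow_le_pow_of_le_one h0 h1 h

private lemma flat_tendsto (a : ℝ) (ha : 0 < a) (q d e : ℕ) (S : ℝ → ℝ)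
    (he : e ≤ q + d)
    (hS : ContDiffOn ℝ q S (Set.Ico 0 a))
    (hflat : ∀ j, j ≤ q → iteratedDerivWithin j S (Set.Ico 0 a) 0 = 0) :
    Tendsto (fun r => S r * r ^ d / r ^ e) (𝓝[≥] (0:ℝ)) (𝓝 0) := by
  have hS0 : S 0 = 0 := by
    have := hflat 0 (Nat.zero_le q); rwa [iteratedDerivWithin_zero] at this
  set p := min q e with hp
  have h1 : p ≤ q := min_le_left _ _
  have hpd : e ≤ p + d := by
    rcases le_total q e with h | h
    · rw [hp, min_eq_left h]; omega
    · rw [hp, min_eq_right h]; omega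
  have hO := flat_littleO a ha p q S h1 hS hflat
  rw [NormedAddCommGroup.tendsto_nhds_zero]
  intro ε hε
  have hev := isLittleO_iff.mp hO (half_pos hε)
  filter_upwards [hev, Ico_mem_nhdsGE one_pos]
    with r h1' h2'
  have hr0 : 0 ≤ r := h2'.1
  have hr1 : r ≤ 1 := h2'.2.le
  have habs : ‖S r * r ^ d / r ^ e‖ = |S r| * r ^ d / r ^ e := by
    rw [Real.norm_eq_abs, abs_div, abs_mul, abs_pow, abs_pow, abs_of_nonneg hr0]
  rw [habs]
  have hSr : |S r| ≤ ε / 2 * r ^ p := by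
    have := h1'
    rwa [Real.norm_eq_abs, Real.norm_eq_abs, abs_of_nonneg (pow_nonneg hr0 p)] at this
  calc |S r| * r ^ d / r ^ e ≤ (ε / 2 * r ^ p) * r ^ d / r ^ e := by
        gcongr
      _ = ε / 2 * (r ^ p * r ^ d / r ^ e) := by ring
      _ ≤ ε / 2 * 1 := by
        apply mul_le_mul_of_nonneg_left (pow_ratio_le_one hr0 hr1 hpd) (half_pos hε).le
      _ < ε := by linarith

private lemma flat_littleO_lin (a : ℝ) (ha : 0 < a) (q d e : ℕ) (S : ℝ → ℝ)
    (he : e + 1 ≤ q + d)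
    (hS : ContDiffOn ℝ q S (Set.Ico 0 a))
    (hflat : ∀ j, j ≤ q → iteratedDerivWithin j S (Set.Ico 0 a) 0 = 0) :
    (fun r => S r * r ^ d / r ^ e) =o[𝓝[≥] (0:ℝ)] fun r => r := by
  have hS0 : S 0 = 0 := by
    have := hflat 0 (Nat.zero_le q); rwa [iteratedDerivWithin_zero] at this
  rw [isLittleO_iff_tendsto]
  · have heq : (fun r : ℝ => (S r * r ^ d / r ^ e) / r) = fun r => S r * r ^ d / r ^ (e+1) := by
      funext r
      rw [div_div, ← pow_succ]
    rw [heq]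
    exact flat_tendsto a ha q d (e+1) S he hS hflat
  · intro r hr
    rw [hr]
    simp [hS0]

open Set Filter Asymptotics Metric Topology

noncomputable section

local notation "E3" => EuclideanSpace ℝ (Fin 3)

private lemma hasFDerivAt_norm_E {x : E3} (hx : x ≠ 0) :
    HasFDerivAt (fun y : E3 => ‖y‖) (‖x‖⁻¹ • (innerSL ℝ x)) x := by
  have hNne : ‖x‖ ≠ 0 := norm_ne_zero_iff.mpr hx
  have hin : HasFDerivAt (fun y : E3 => (inner ℝ y y : ℝ))
      ((fderivInnerCLM ℝ (x, x)).comp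
        ((ContinuousLinearMap.id ℝ E3).prod (ContinuousLinearMap.id ℝ E3))) x :=
    (hasFDerivAt_id x).inner (𝕜 := ℝ) (hasFDerivAt_id x)
  have hne : (inner ℝ x x : ℝ) ≠ 0 := by
    rw [real_inner_self_eq_norm_mul_norm]
    exact mul_ne_zero hNne hNne
  have hcomp := HasDerivAt.comp_hasFDerivAt (f := fun y : E3 => (inner ℝ y y : ℝ)) x (Real.hasDerivAt_sqrt hne) hin
  have hfun : (Real.sqrt ∘ fun y : E3 => (inner ℝ y y : ℝ)) = fun y : E3 => ‖y‖ := by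
    funext y
    simp only [Function.comp_apply, real_inner_self_eq_norm_mul_norm,
      Real.sqrt_mul_self (norm_nonneg y)]
  rw [hfun] at hcomp
  refine HasFDerivAt.congr_fderiv hcomp (Eq.symm ?_)
  ext v
  have hsq : Real.sqrt (inner ℝ x x : ℝ) = ‖x‖ := by
    rw [real_inner_self_eq_norm_mul_norm, Real.sqrt_mul_self (norm_nonneg x)]
  simp only [ContinuousLinearMap.coe_smul', Pi.smul_apply, innerSL_apply_apply,
    ContinuousLinearMap.coe_comp', Function.comp_apply, hsq, smul_eq_mul,
    fderivInnerCLM_apply, ContinuousLinearMap.prod_apply, ContinuousLinearMap.coe_id', id_eq]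
  rw [real_inner_comm v x]
  field_simp
  ring

private lemma abs_coord_le_norm (y : E3) (i : Fin 3) : |y i| ≤ ‖y‖ := by
  rw [EuclideanSpace.norm_eq]
  rw [show |y i| = Real.sqrt (|y i| ^ 2) from (Real.sqrt_sq (abs_nonneg _)).symm]
  apply Real.sqrt_le_sqrt
  rw [sq_abs]
  have : (y i) ^ 2 = ‖y i‖ ^ 2 := by rw [Real.norm_eq_abs, sq_abs]
  rw [this]
  exact Finset.single_le_sum (f := fun j => ‖y j‖ ^ 2)
    (fun j _ => sq_nonneg _) (Finset.mem_univ i)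

private lemma prod_pow_le_norm (y : E3) (α : Fin 3 → ℕ) :
    |∏ i, (y i) ^ (α i)| ≤ ‖y‖ ^ (∑ i, α i) := by
  rw [Finset.abs_prod, ← Finset.prod_pow_eq_pow_sum]
  apply Finset.prod_le_prod (fun i _ => abs_nonneg _)
  intro i _
  rw [abs_pow]
  exact pow_le_pow_left₀ (abs_nonneg _) (abs_coord_le_norm y i) (α i)

private lemma clm_repr_E (ℓ : E3 →L[ℝ] ℝ) :
    ℓ = ∑ i, ℓ (EuclideanSpace.single i 1) • (EuclideanSpace.proj i : E3 →L[ℝ] ℝ) := by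
  ext v
  have hv : ∑ i, (EuclideanSpace.basisFun (Fin 3) ℝ).repr v i •
      (EuclideanSpace.basisFun (Fin 3) ℝ) i = v :=
    (EuclideanSpace.basisFun (Fin 3) ℝ).sum_repr v
  simp only [EuclideanSpace.basisFun_apply, EuclideanSpace.basisFun_repr] at hv
  conv_lhs => rw [← hv]
  rw [map_sum]
  simp only [map_smul, smul_eq_mul, ContinuousLinearMap.sum_apply,
    ContinuousLinearMap.smul_apply, EuclideanSpace.proj]
  apply Finset.sum_congr rfl
  intro i _
  simp [mul_comm]

/-- On an open set, `iteratedDerivWithin` agrees with `iteratedDeriv`. -/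
private lemma iterWithin_eq_iter_of_isOpen (k : ℕ) (f : ℝ → ℝ) {t : Set ℝ} (ht : IsOpen t) :
    Set.EqOn (iteratedDerivWithin k f t) (iteratedDeriv k f) t := by
  induction k with
  | zero => intro x hx; simp [iteratedDerivWithin_zero, iteratedDeriv_zero]
  | succ k IH =>
    intro x hx
    rw [iteratedDerivWithin_succ, iteratedDeriv_succ,
      derivWithin_congr IH (IH hx), derivWithin_of_isOpen ht hx]

private lemma iterWithin_eq_iter (k : ℕ) (f : ℝ → ℝ) {s t : Set ℝ}
    (hst : s ⊆ t) (hs : UniqueDiffOn ℝ s) (ht : IsOpen t)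
    (hf : ContDiffOn ℝ (k : ℕ) f t) :
    ∀ x ∈ s, iteratedDerivWithin k f s x = iteratedDeriv k f x := by
  induction k with
  | zero => intro x hx; simp [iteratedDerivWithin_zero, iteratedDeriv_zero]
  | succ k IH =>
    intro x hx
    have hk : ContDiffOn ℝ (k : ℕ) f t := hf.of_le (by exact_mod_cast Nat.le_succ k)
    rw [iteratedDerivWithin_succ,
      derivWithin_congr (fun y hy => IH hk y hy) (IH hk x hx), iteratedDeriv_succ]
    have hdiff : DifferentiableAt ℝ (iteratedDeriv k f) x := by
      have hDW : DifferentiableOn ℝ (iteratedDerivWithin k f t) t :=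
        hf.differentiableOn_iteratedDerivWithin (by exact_mod_cast Nat.lt_succ_self k)
          ht.uniqueDiffOn
      have : DifferentiableWithinAt ℝ (iteratedDeriv k f) t x :=
        (hDW x (hst hx)).congr (fun y hy => (iterWithin_eq_iter_of_isOpen k f ht hy).symm)
          ((iterWithin_eq_iter_of_isOpen k f ht (hst hx)).symm)
      exact this.differentiableAt (ht.mem_nhds (hst hx))
    exact hdiff.derivWithin (hs x hx)

/-- Iterated derivatives of `r ↦ C * r ^ k`. -/
private lemma iteratedDeriv_monomial (C : ℝ) (k : ℕ) :
    ∀ j, iteratedDeriv j (fun r : ℝ => C * r ^ k) =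
      fun r => C * (k.descFactorial j) * r ^ (k - j) := by
  intro j
  induction j with
  | zero => funext r; simp
  | succ j IH =>
    funext r
    rw [iteratedDeriv_succ, IH]
    have h1 : deriv (fun r : ℝ => C * (k.descFactorial j) * r ^ (k - j)) r
        = C * (k.descFactorial j) * ((k - j : ℕ) * r ^ (k - j - 1)) := by
      rw [deriv_const_mul _ (differentiableAt_pow _), deriv_pow_field]
    rw [h1, Nat.descFactorial_succ]
    push_cast
    have : k - (j + 1) = k - j - 1 := by omega
    rw [this]
    ring

private lemma G_abs_bound (S : ℝ → ℝ) (e : ℕ) (α : Fin 3 → ℕ) (y : E3) :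
    |S ‖y‖ / ‖y‖ ^ e * ∏ i, (y i) ^ (α i)| ≤ |S ‖y‖ * ‖y‖ ^ (∑ i, α i) / ‖y‖ ^ e| := by
  have hr : (0:ℝ) ≤ ‖y‖ := norm_nonneg y
  rw [abs_mul, abs_div, abs_div, abs_mul, abs_pow, abs_pow, abs_norm]
  calc |S ‖y‖| / ‖y‖ ^ e * |∏ i, (y i) ^ (α i)|
      ≤ |S ‖y‖| / ‖y‖ ^ e * ‖y‖ ^ (∑ i, α i) := by
        apply mul_le_mul_of_nonneg_left (prod_pow_le_norm y α)
          (div_nonneg (abs_nonneg _) (pow_nonneg hr _))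
    _ = |S ‖y‖| * ‖y‖ ^ (∑ i, α i) / ‖y‖ ^ e := by ring

set_option maxHeartbeats 1000000 in
private lemma key (a : ℝ) (ha : 0 < a) :
    ∀ (m q e : ℕ) (α : Fin 3 → ℕ) (S : ℝ → ℝ), m ≤ q → m + e ≤ q + (∑ i, α i) →
    ContDiffOn ℝ q S (Set.Ico 0 a) →
    (∀ j, j ≤ q → iteratedDerivWithin j S (Set.Ico 0 a) 0 = 0) →
    ContDiffOn ℝ m (fun x : E3 => S ‖x‖ / ‖x‖ ^ e * ∏ i, (x i) ^ (α i)) (Metric.ball 0 a) := by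
  have h0I : (0:ℝ) ∈ Set.Ico 0 a := ⟨le_rfl, ha⟩
  have hud := udiffIco a ha
  intro m
  induction m with
  | zero =>
    intro q e α S hm hφ hS hflat
    have hS0 : S 0 = 0 := by
      have := hflat 0 (Nat.zero_le q); rwa [iteratedDerivWithin_zero] at this
    rw [show ((0:ℕ) : WithTop ℕ∞) = 0 from rfl, contDiffOn_zero]
    intro x hx
    by_cases hx0 : x = 0
    · subst hx0
      have hval : S ‖(0:E3)‖ / ‖(0:E3)‖ ^ e * ∏ i, ((0:E3) i) ^ (α i) = 0 := by
        simp [hS0]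
      rw [ContinuousWithinAt, hval]
      have hT := flat_tendsto a ha q (∑ i, α i) e S (by omega) hS hflat
      have hnt : Tendsto (fun y : E3 => ‖y‖) (𝓝[Metric.ball (0:E3) a] 0) (𝓝[≥] (0:ℝ)) := by
        rw [tendsto_nhdsWithin_iff]
        refine ⟨?_, Filter.Eventually.of_forall fun y => norm_nonneg y⟩
        have h0 : Tendsto (fun y : E3 => ‖y‖) (𝓝 0) (𝓝 (0:ℝ)) := by
          simpa using continuous_norm.tendsto (0:E3)
        exact h0.mono_left nhdsWithin_le_nhds
      have hcomp := hT.comp hnt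
      rw [tendsto_zero_iff_abs_tendsto_zero]
      apply squeeze_zero (fun y => abs_nonneg _) (fun y => G_abs_bound S e α y)
      have := hcomp.abs
      simpa [Function.comp] using this
    · have hN : 0 < ‖x‖ := norm_pos_iff.mpr hx0
      have hNa : ‖x‖ < a := by rwa [Metric.mem_ball, dist_zero_right] at hx
      have hIN : Set.Ico (0:ℝ) a ∈ 𝓝 ‖x‖ :=
        mem_of_superset (Ioo_mem_nhds hN hNa) Set.Ioo_subset_Ico_self
      apply ContinuousAt.continuousWithinAt
      have hc1 : ContinuousAt (fun y : E3 => S ‖y‖) x :=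
        (hS.continuousOn.continuousAt hIN).comp continuous_norm.continuousAt
      have hc2 : ContinuousAt (fun y : E3 => (‖y‖ ^ e)) x := (continuous_norm.pow e).continuousAt
      have hc3 : ContinuousAt (fun y : E3 => ∏ i, (y i) ^ (α i)) x :=
        (Continuous.continuousAt
          (continuous_finset_prod _ fun i _ => ((EuclideanSpace.proj (𝕜 := ℝ) i).continuous.pow (α i))))
      exact (hc1.div hc2 (pow_ne_zero e hN.ne')).mul hc3
  | succ m IH =>
    intro q e α S hm hφ hS hflat
    set d := ∑ i, α i with hd
    have hq1 : 1 ≤ q := le_trans (by omega) hm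
    have hS0 : S 0 = 0 := by
      have := hflat 0 (Nat.zero_le q); rwa [iteratedDerivWithin_zero] at this
    set S₁ := derivWithin S (Set.Ico 0 a) with hS₁def
    have hS₁ : ContDiffOn ℝ ((q-1:ℕ) : WithTop ℕ∞) S₁ (Set.Ico 0 a) := by
      apply hS.derivWithin hud
      have : ((q - 1 : ℕ) : WithTop ℕ∞) + 1 = ((q - 1 + 1 : ℕ) : WithTop ℕ∞) := by push_cast; ring
      rw [this]
      exact_mod_cast Nat.le_of_eq (Nat.succ_pred_eq_of_pos hq1)
    have hflat₁ : ∀ j, j ≤ q - 1 → iteratedDerivWithin j S₁ (Set.Ico 0 a) 0 = 0 := by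
      intro j hj
      rw [hS₁def, ← iteratedDerivWithin_succ']
      exact hflat (j+1) (by omega)
    set A1 : Fin 3 → Fin 3 → ℕ := fun i j => α j + (if j = i then 1 else 0) with hA1
    set A2 : Fin 3 → Fin 3 → ℕ := fun i j => α j - (if j = i then 1 else 0) with hA2
    have hA1sum : ∀ i, (∑ j, A1 i j) = d + 1 := by
      intro i
      rw [hA1, hd, Finset.sum_add_distrib]
      simp
    have hA2sum : ∀ i, d ≤ (∑ j, A2 i j) + 1 := by
      intro i
      have hle : ∀ j, α j ≤ A2 i j + (if j = i then 1 else 0) := by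
        intro j; rw [hA2]; dsimp only; split <;> omega
      calc d = ∑ j, α j := hd
        _ ≤ ∑ j, (A2 i j + if j = i then 1 else 0) :=
            Finset.sum_le_sum (fun j _ => hle j)
        _ = (∑ j, A2 i j) + 1 := by rw [Finset.sum_add_distrib]; simp
    set Gd : Fin 3 → E3 → ℝ := fun i x =>
      S₁ ‖x‖ / ‖x‖ ^ (e+1) * ∏ j, (x j) ^ (A1 i j)
      + (-(e:ℝ)) * (S ‖x‖ / ‖x‖ ^ (e+2) * ∏ j, (x j) ^ (A1 i j))
      + ((α i : ℝ)) * (S ‖x‖ / ‖x‖ ^ e * ∏ j, (x j) ^ (A2 i j)) with hGd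
    have hGdC : ∀ i, ContDiffOn ℝ m (Gd i) (Metric.ball 0 a) := by
      intro i
      rw [hGd]
      apply ContDiffOn.add
      apply ContDiffOn.add
      · exact IH (q-1) (e+1) (A1 i) S₁ (by omega) (by rw [hA1sum]; omega) hS₁ hflat₁
      · exact contDiffOn_const.mul
          (IH q (e+2) (A1 i) S (by omega) (by rw [hA1sum]; omega) hS hflat)
      · exact contDiffOn_const.mul
          (IH q e (A2 i) S (by omega) (by have := hA2sum i; omega) hS hflat)
    set D : E3 → (E3 →L[ℝ] ℝ) :=
      fun x => ∑ i, Gd i x • (EuclideanSpace.proj i : E3 →L[ℝ] ℝ) with hD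
    have hDer : ∀ x ∈ Metric.ball (0:E3) a,
        HasFDerivAt (fun x : E3 => S ‖x‖ / ‖x‖ ^ e * ∏ i, (x i) ^ (α i)) (D x) x := by
      intro x hx
      by_cases hx0 : x = 0
      · subst hx0
        have hGd0 : ∀ i, Gd i (0:E3) = 0 := by
          intro i
          rw [hGd]
          have h1 : ∏ j, ((0:E3) j) ^ (A1 i j) = 0 :=
            Finset.prod_eq_zero (Finset.mem_univ i) (by rw [hA1]; simp)
          simp [h1, hS0]
        have hD0 : D (0:E3) = 0 := by
          rw [hD]
          simp [hGd0]
        rw [hD0, hasFDerivAt_iff_isLittleO_nhds_zero]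
        have hG0 : S ‖(0:E3)‖ / ‖(0:E3)‖ ^ e * ∏ i, ((0:E3) i) ^ (α i) = 0 := by simp [hS0]
        simp only [zero_add, ContinuousLinearMap.zero_apply, sub_zero, hG0]
        have base := flat_littleO_lin a ha q d e S (by omega) hS hflat
        have hnt : Tendsto (fun y : E3 => ‖y‖) (𝓝 0) (𝓝[≥] (0:ℝ)) := by
          rw [tendsto_nhdsWithin_iff]
          exact ⟨by simpa using continuous_norm.tendsto (0:E3),
            Filter.Eventually.of_forall fun y => norm_nonneg y⟩
        have big := base.comp_tendsto hnt
        rw [isLittleO_iff]; intro c hc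
        filter_upwards [isLittleO_iff.mp big hc] with y hy
        calc ‖S ‖y‖ / ‖y‖ ^ e * ∏ i, (y i) ^ (α i)‖
            ≤ ‖S ‖y‖ * ‖y‖ ^ d / ‖y‖ ^ e‖ := by
              rw [Real.norm_eq_abs, Real.norm_eq_abs]; exact G_abs_bound S e α y
          _ ≤ c * ‖y‖ := by simpa [Function.comp] using hy
      · have hN : 0 < ‖x‖ := norm_pos_iff.mpr hx0
        have hNa : ‖x‖ < a := by rwa [Metric.mem_ball, dist_zero_right] at hx
        have hIN : Set.Ico (0:ℝ) a ∈ 𝓝 ‖x‖ :=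
          mem_of_superset (Ioo_mem_nhds hN hNa) Set.Ioo_subset_Ico_self
        have hSd : HasDerivAt S (S₁ ‖x‖) ‖x‖ := by
          have h1 : DifferentiableAt ℝ S ‖x‖ :=
            (hS.contDiffAt hIN).differentiableAt (by exact_mod_cast (by omega : q ≠ 0))
          have h2 := h1.hasDerivAt
          rwa [hS₁def, derivWithin_of_mem_nhds hIN]
        have hg : HasDerivAt (fun r : ℝ => S r / r ^ e)
            (S₁ ‖x‖ / ‖x‖ ^ e - e * S ‖x‖ / ‖x‖ ^ (e+1)) ‖x‖ := by
          have h := hSd.div (hasDerivAt_pow e ‖x‖) (pow_ne_zero e hN.ne')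
          refine HasDerivAt.congr_deriv h (Eq.symm ?_)
          rcases Nat.eq_zero_or_pos e with rfl | he
          · simp
          · obtain ⟨e', rfl⟩ : ∃ e', e = e' + 1 := ⟨e - 1, (Nat.succ_pred_eq_of_pos he).symm⟩
            simp only [Nat.add_sub_cancel]
            field_simp
            ring
        have hgN : HasFDerivAt (fun y : E3 => S ‖y‖ / ‖y‖ ^ e)
            ((S₁ ‖x‖ / ‖x‖ ^ e - e * S ‖x‖ / ‖x‖ ^ (e+1)) • (‖x‖⁻¹ • innerSL ℝ x)) x :=
          HasDerivAt.comp_hasFDerivAt (f := fun y : E3 => ‖y‖) x hg (hasFDerivAt_norm_E hx0)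
        have hpj : ∀ j : Fin 3, HasFDerivAt (fun y : E3 => y j)
            (EuclideanSpace.proj j : E3 →L[ℝ] ℝ) x := by
          intro j
          exact (EuclideanSpace.proj (𝕜 := ℝ) (ι := Fin 3) j).hasFDerivAt
        have hmono : ∀ j : Fin 3, HasFDerivAt (fun y : E3 => (y j) ^ (α j))
            (((α j : ℝ) * (x j) ^ (α j - 1)) • (EuclideanSpace.proj j : E3 →L[ℝ] ℝ)) x := fun j =>
          HasDerivAt.comp_hasFDerivAt (f := fun y : E3 => y j) x (hasDerivAt_pow (α j) (x j))
            (hpj j)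
        have hNne : ‖x‖ ≠ 0 := hN.ne'
        have hprod := (HasFDerivAt.mul (hmono 0) (hmono 1)).mul (hmono 2)
        have hGx := hgN.mul hprod
        have hfun : (fun y : E3 => S ‖y‖ / ‖y‖ ^ e * ∏ i, (y i) ^ (α i))
            = fun y : E3 => S ‖y‖ / ‖y‖ ^ e * ((y 0) ^ (α 0) * (y 1) ^ (α 1) * (y 2) ^ (α 2)) := by
          funext y
          rw [Fin.prod_univ_three]
        rw [hfun]
        refine HasFDerivAt.congr_fderiv hGx (Eq.symm ?_)
        simp only [hD, hGd, hA1, hA2]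
        apply ContinuousLinearMap.ext
        intro v
        have hproj : ∀ (j : Fin 3), (EuclideanSpace.proj j : E3 →L[ℝ] ℝ) v = v j := fun j => rfl
        simp only [ContinuousLinearMap.add_apply, ContinuousLinearMap.coe_smul', Pi.smul_apply,
          ContinuousLinearMap.sum_apply, ContinuousLinearMap.smul_apply, smul_eq_mul,
          innerSL_apply_apply, PiLp.inner_apply, RCLike.inner_apply, conj_trivial,
          Fin.sum_univ_three, Fin.prod_univ_three, hproj]
        simp only [show ((0:Fin 3) = 1) = False from by decide,
          show ((0:Fin 3) = 2) = False from by decide,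
          show ((1:Fin 3) = 0) = False from by decide,
          show ((1:Fin 3) = 2) = False from by decide,
          show ((2:Fin 3) = 0) = False from by decide,
          show ((2:Fin 3) = 1) = False from by decide,
          if_false, if_true, ite_true, ite_false, Nat.add_zero, Nat.sub_zero, pow_zero, mul_one]
        norm_num
        field_simp
        ring

    have hDC : ContDiffOn ℝ m D (Metric.ball 0 a) := by
      rw [hD]
      exact ContDiffOn.sum (fun i _ => (hGdC i).smul contDiffOn_const)
    rw [show ((m+1 : ℕ) : WithTop ℕ∞) = (m : WithTop ℕ∞) + 1 by push_cast; ring]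
    rw [contDiffOn_succ_iff_fderiv_of_isOpen Metric.isOpen_ball]
    refine ⟨fun x hx => ((hDer x hx).differentiableAt).differentiableWithinAt, ?_, ?_⟩
    · intro hω; exact absurd hω (by simp)
    · exact hDC.congr (fun x hx => (hDer x hx).fderiv)

private lemma iteratedDeriv_poly (n : ℕ) (c : ℕ → ℝ) :
    ∀ j, iteratedDeriv j (fun r : ℝ => ∑ k ∈ Finset.range (n+1), c k * r ^ k)
      = fun r => ∑ k ∈ Finset.range (n+1), c k * (k.descFactorial j) * r ^ (k - j) := by
  intro j
  induction j with
  | zero => funext r; simp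
  | succ j IH =>
    funext r
    rw [iteratedDeriv_succ, IH]
    rw [deriv_fun_sum (fun k _ => (differentiableAt_pow _).const_mul _)]
    apply Finset.sum_congr rfl
    intro k _
    rw [deriv_const_mul _ (differentiableAt_pow _), deriv_pow_field]
    rw [Nat.descFactorial_succ, show k - (j+1) = k - j - 1 from by omega]
    push_cast
    ring

private lemma iteratedDeriv_poly_at_zero (n : ℕ) (c : ℕ → ℝ) (j : ℕ) (hj : j ≤ n) :
    iteratedDeriv j (fun r : ℝ => ∑ k ∈ Finset.range (n+1), c k / k.factorial * r ^ k) 0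
      = c j := by
  rw [iteratedDeriv_poly n (fun k => c k / k.factorial) j]
  dsimp only
  rw [Finset.sum_eq_single j]
  · rw [show j - j = 0 from by omega, pow_zero, mul_one, Nat.descFactorial_self,
      div_mul_cancel₀]
    exact_mod_cast (Nat.factorial_pos j).ne'
  · intro k _ hkj
    rcases lt_or_gt_of_ne hkj with h | h
    · rw [Nat.descFactorial_eq_zero_iff_lt.mpr h]; simp
    · rw [zero_pow (by omega : k - j ≠ 0)]; simp
  · intro h; exact absurd (Finset.mem_range.mpr (by omega)) h

private lemma contDiff_poly (n : ℕ) (c : ℕ → ℝ) (N : WithTop ℕ∞) :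
    ContDiff ℝ N (fun r : ℝ => ∑ k ∈ Finset.range (n+1), c k * r ^ k) :=
  ContDiff.sum (fun k _ => contDiff_const.mul (contDiff_id.pow k))

theorem radial_smoothness_iff
    (a : ℝ) (ha : 0 < a) (n : ℕ)
    (q : EuclideanSpace ℝ (Fin 3) → ℝ) (qbar : ℝ → ℝ)
    (hrad : ∀ x ∈ Metric.ball (0 : EuclideanSpace ℝ (Fin 3)) a, q x = qbar ‖x‖) :
    ContDiffOn ℝ n q (Metric.ball (0 : EuclideanSpace ℝ (Fin 3)) a) ↔
      (ContDiffOn ℝ n qbar (Set.Ico 0 a) ∧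
        ∀ k, k ≤ n → Odd k → iteratedDerivWithin k qbar (Set.Ico 0 a) 0 = 0) := by
  have hud := udiffIco a ha
  have h0I : (0:ℝ) ∈ Set.Ico 0 a := ⟨le_rfl, ha⟩
  constructor
  · intro hq
    set e₀ : E3 := EuclideanSpace.single 0 1 with he₀
    have hne₀ : ‖e₀‖ = 1 := by rw [he₀, EuclideanSpace.norm_single, norm_one]
    have hφC : ContDiff ℝ n (fun r : ℝ => r • e₀) := contDiff_id.smul contDiff_const
    have hmaps : ∀ r ∈ Set.Ioo (-a) a, (r • e₀) ∈ Metric.ball (0 : E3) a := by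
      intro r hr
      rw [Metric.mem_ball, dist_zero_right, norm_smul, hne₀, mul_one]
      exact abs_lt.mpr ⟨hr.1, hr.2⟩
    set Q : ℝ → ℝ := fun r => qbar |r| with hQdef
    have hQq : ∀ r ∈ Set.Ioo (-a) a, q (r • e₀) = Q r := by
      intro r hr
      rw [hrad _ (hmaps r hr), norm_smul, hne₀, mul_one, hQdef]
      simp [Real.norm_eq_abs]
    have hQ : ContDiffOn ℝ n Q (Set.Ioo (-a) a) := by
      have hcomp := hq.comp (hφC.contDiffOn) (fun r hr => hmaps r hr)
      exact hcomp.congr (fun r hr => (hQq r hr).symm)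
    have hIsub : Set.Ico (0:ℝ) a ⊆ Set.Ioo (-a) a :=
      fun r hr => ⟨lt_of_lt_of_le (neg_lt_zero.mpr ha) hr.1, hr.2⟩
    have hqbarQ : Set.EqOn qbar Q (Set.Ico 0 a) := by
      intro r hr
      rw [hQdef]
      simp only [abs_of_nonneg hr.1]
    refine ⟨(hQ.mono hIsub).congr hqbarQ, ?_⟩
    intro k hk hodd
    have h1 : iteratedDerivWithin k qbar (Set.Ico 0 a) 0
        = iteratedDerivWithin k Q (Set.Ico 0 a) 0 :=
      iteratedDerivWithin_congr hqbarQ h0I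
    have h2 : iteratedDerivWithin k Q (Set.Ico 0 a) 0 = iteratedDeriv k Q 0 :=
      iterWithin_eq_iter k Q hIsub hud isOpen_Ioo (hQ.of_le (by exact_mod_cast hk)) 0 h0I
    have hQe : (fun r : ℝ => Q (-r)) = Q := by
      funext r; rw [hQdef]; simp [abs_neg]
    have h3 := iteratedDeriv_comp_neg k Q 0
    rw [hQe, neg_zero] at h3
    have h4 : iteratedDeriv k Q 0 = -iteratedDeriv k Q 0 := by
      calc iteratedDeriv k Q 0 = (-1)^k • iteratedDeriv k Q 0 := h3
        _ = -iteratedDeriv k Q 0 := by rw [hodd.neg_one_pow]; simp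
    rw [h1, h2]
    linarith
  · rintro ⟨hqbar, hodd⟩
    set c : ℕ → ℝ := fun j => iteratedDerivWithin j qbar (Set.Ico 0 a) 0 with hc
    set P : ℝ → ℝ := fun r => ∑ k ∈ Finset.range (n+1), c k / k.factorial * r ^ k with hP
    have hPC : ∀ N : WithTop ℕ∞, ContDiff ℝ N P := by
      intro N; rw [hP]
      exact contDiff_poly n (fun k => c k / k.factorial) N
    have hPder : ∀ j, j ≤ n → iteratedDerivWithin j P (Set.Ico 0 a) 0 = c j := by
      intro j hj
      rw [iterWithin_eq_iter j P (Set.subset_univ _) hud isOpen_univ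
        ((hPC j).contDiffOn) 0 h0I, hP]
      exact iteratedDeriv_poly_at_zero n c j hj
    set R : ℝ → ℝ := fun r => qbar r - P r with hR
    have hRC : ContDiffOn ℝ n R (Set.Ico 0 a) := hqbar.sub ((hPC n).contDiffOn)
    have hRflat : ∀ j, j ≤ n → iteratedDerivWithin j R (Set.Ico 0 a) 0 = 0 := by
      intro j hj
      have hsub := iteratedDerivWithin_sub h0I hud
        (hqbar.of_le (by exact_mod_cast hj) 0 h0I) ((hPC j).contDiffOn 0 h0I)
      calc iteratedDerivWithin j R (Set.Ico 0 a) 0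
          = iteratedDerivWithin j (qbar - P) (Set.Ico 0 a) 0 := rfl
        _ = iteratedDerivWithin j qbar (Set.Ico 0 a) 0
            - iteratedDerivWithin j P (Set.Ico 0 a) 0 := hsub
        _ = c j - c j := by rw [hPder j hj]
        _ = 0 := sub_self _
    have hRB := key a ha n n 0 (fun _ => 0) R le_rfl (by simp) hRC hRflat
    have hRB' : ContDiffOn ℝ n (fun x : E3 => R ‖x‖) (Metric.ball 0 a) := by
      have hfn : (fun x : E3 => R ‖x‖ / ‖x‖ ^ 0 * ∏ i : Fin 3, (x i) ^ (0:ℕ))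
          = fun x : E3 => R ‖x‖ := by
        funext x; simp
      rwa [hfn] at hRB
    have hPB : ContDiffOn ℝ n (fun x : E3 => P ‖x‖) (Metric.ball 0 a) := by
      rw [hP]
      apply ContDiffOn.sum
      intro k hk
      have hkn : k ≤ n := by
        have := Finset.mem_range.mp hk; omega
      rcases Nat.even_or_odd k with he | ho
      · obtain ⟨t, ht⟩ := he
        have hfn : (fun x : E3 => c k / k.factorial * ‖x‖ ^ k)
            = fun x : E3 => c k / k.factorial * (‖x‖ ^ 2) ^ t := by
          funext x; rw [← pow_mul, show 2 * t = k from by omega]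
        rw [hfn]
        exact (contDiff_const.mul ((contDiff_norm_sq ℝ).pow t)).contDiffOn
      · have hck : c k = 0 := hodd k hkn ho
        have hfn : (fun x : E3 => c k / k.factorial * ‖x‖ ^ k) = fun _ : E3 => (0:ℝ) := by
          funext x; rw [hck]; simp
        rw [hfn]
        exact contDiffOn_const
    apply (hPB.add hRB').congr
    intro x hx
    rw [hrad x hx, hR]
    simp
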